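/- For the power hypergraph Pwr(G) — whose vertices are subsets of V(G), whose edges are subsets of E(G), whose incidences are the subhypergraphs K of G with ς(K) = V(K) and ω(K) = E(K) — and the evaluation morphism elem_G : G × Pwr(G) → Ω, the pair (Pwr(G), elem_G) is a power object: for every morphism φ : G × K → Ω there is a unique morphism φ̂ : K → Pwr(G) with elem_G ∘ (id_G × φ̂) = φ. -/

import Mathlib

open CategoryTheory Limits

/-- An incidence hypergraph: vertices, edges, incidences, and two structure maps. -/
structure IncHG : Type 1 where
  V : Type
  E : Type
  I : Type
  vmap : I → V
  emap : I → E

/-- A homomorphism of incidence hypergraphs. -/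
@[ext]
structure IncHG.Hom (G H : IncHG) where
  fV : G.V → H.V
  fE : G.E → H.E
  fI : G.I → H.I
  comm_v : ∀ i, H.vmap (fI i) = fV (G.vmap i)
  comm_e : ∀ i, H.emap (fI i) = fE (G.emap i)

instance : Category IncHG where
  Hom := IncHG.Hom
  id G := ⟨id, id, id, fun _ => rfl, fun _ => rfl⟩
  comp f g := ⟨g.fV ∘ f.fV, g.fE ∘ f.fE, g.fI ∘ f.fI,
    fun i => by simp [IncHG.Hom.comm_v], fun i => by simp [IncHG.Hom.comm_e]⟩
  id_comp f := rfl
  comp_id f := rfl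
  assoc f g h := rfl

/-- A subhypergraph of `G`. -/
structure IncHG.Sub (G : IncHG) where
  V' : Set G.V
  E' : Set G.E
  I' : Set G.I
  closed_v : ∀ i ∈ I', G.vmap i ∈ V'
  closed_e : ∀ i ∈ I', G.emap i ∈ E'

/-- The subobject classifier `Ω`: two vertices, two edges, one 'true' incidence
(`none`) and one 'false' incidence `some (v, e)` for each vertex-edge pair. -/
def OmegaIH : IncHG where
  V := Bool
  E := Bool
  I := Option (Bool × Bool)
  vmap := fun i => match i with | none => true | some p => p.1
  emap := fun i => match i with | none => true | some p => p.2

/-- The power hypergraph `Pwr(G)`: vertices are vertex subsets, edges are edge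
subsets, incidences are subhypergraphs of `G`, with structure maps `K ↦ V(K)` and
`K ↦ E(K)`. -/
def PwrIH (G : IncHG) : IncHG where
  V := Set G.V
  E := Set G.E
  I := IncHG.Sub G
  vmap := fun K => K.V'
  emap := fun K => K.E'

/-- The (categorical) product of two incidence hypergraphs, computed componentwise. -/
def prodIH (G K : IncHG) : IncHG where
  V := G.V × K.V
  E := G.E × K.E
  I := G.I × K.I
  vmap := fun p => (G.vmap p.1, K.vmap p.2)
  emap := fun p => (G.emap p.1, K.emap p.2)

/-- `id_G × f` on products. -/
def prodHom (G : IncHG) {A B : IncHG} (f : A ⟶ B) : prodIH G A ⟶ prodIH G B where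
  fV := fun p => (p.1, IncHG.Hom.fV f p.2)
  fE := fun p => (p.1, IncHG.Hom.fE f p.2)
  fI := fun p => (p.1, IncHG.Hom.fI f p.2)
  comm_v := fun p => by simp [prodIH, IncHG.Hom.comm_v]
  comm_e := fun p => by simp [prodIH, IncHG.Hom.comm_e]

/-- The membership evaluation morphism `elem_G : G × Pwr(G) ⟶ Ω`. -/
noncomputable def elemIH (G : IncHG) : prodIH G (PwrIH G) ⟶ OmegaIH := by
  classical
  exact
    { fV := fun p : G.V × Set G.V => decide (p.1 ∈ p.2)
      fE := fun p : G.E × Set G.E => decide (p.1 ∈ p.2)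
      fI := fun p =>
        if p.1 ∈ p.2.I' then none
        else some (decide (G.vmap p.1 ∈ p.2.V'), decide (G.emap p.1 ∈ p.2.E'))
      comm_v := fun p => by
        by_cases h : p.1 ∈ p.2.I'
        · simp [prodIH, PwrIH, OmegaIH, h, p.2.closed_v _ h]
        · simp [prodIH, PwrIH, OmegaIH, h] <;> first | congr | exact decide_eq_decide.mpr Iff.rfl
      comm_e := fun p => by
        by_cases h : p.1 ∈ p.2.I'
        · simp [prodIH, PwrIH, OmegaIH, h, p.2.closed_e _ h]
        · simp [prodIH, PwrIH, OmegaIH, h] <;> first | congr | exact decide_eq_decide.mpr Iff.rfl }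

/-- `(Pwr(G), elem_G)` is a power object: every `φ : G × K ⟶ Ω` factors uniquely as
`elem_G ∘ (id_G × φ̂)` for a unique `φ̂ : K ⟶ Pwr(G)`. -/
lemma IncHG.Sub.ext' {G : IncHG} {A B : IncHG.Sub G}
    (hV : A.V' = B.V') (hE : A.E' = B.E') (hI : A.I' = B.I') : A = B := by
  cases A; cases B; simp_all

theorem pwrIH_powerObject (G K : IncHG) (φ : prodIH G K ⟶ OmegaIH) :
    ∃! φh : K ⟶ PwrIH G, prodHom G φh ≫ elemIH G = φ := by
  classical
  have hcv : ∀ (i : G.I) (j : K.I),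
      OmegaIH.vmap (φ.fI (i, j)) = φ.fV (G.vmap i, K.vmap j) := fun i j => φ.comm_v (i, j)
  have hce : ∀ (i : G.I) (j : K.I),
      OmegaIH.emap (φ.fI (i, j)) = φ.fE (G.emap i, K.emap j) := fun i j => φ.comm_e (i, j)
  refine ⟨{ fV := fun k => {v | φ.fV (v, k) = true}
            fE := fun e => {x | φ.fE (x, e) = true}
            fI := fun j =>
              { V' := {v | φ.fV (v, K.vmap j) = true}
                E' := {x | φ.fE (x, K.emap j) = true}
                I' := {i | φ.fI (i, j) = none}
                closed_v := by
                  intro i hi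
                  have h := hcv i j
                  rw [hi] at h
                  exact h.symm
                closed_e := by
                  intro i hi
                  have h := hce i j
                  rw [hi] at h
                  exact h.symm }
            comm_v := fun j => rfl
            comm_e := fun j => rfl }, ?_, ?_⟩
  · apply IncHG.Hom.ext
    · funext p
      show decide (φ.fV p = true) = φ.fV p
      cases h : φ.fV p <;> simp_all <;> rfl
    · funext p
      show decide (φ.fE p = true) = φ.fE p
      cases h : φ.fE p <;> simp_all <;> rfl
    · funext p
      obtain ⟨i, j⟩ := p
      show (if φ.fI (i, j) = none then none
        else some (decide (φ.fV (G.vmap i, K.vmap j) = true),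
          decide (φ.fE (G.emap i, K.emap j) = true))) = φ.fI (i, j)
      rcases h : φ.fI (i, j) with _ | ⟨a, b⟩
      · simp; rfl
      · have h1 := hcv i j
        have h2 := hce i j
        rw [h] at h1 h2
        simp only [OmegaIH] at h1 h2
        simp only [h, ← h1, ← h2]
        cases a <;> cases b <;> simp <;> constructor <;> rfl
  · intro ψ hψ
    have hV : ψ.fV = fun k => {v | φ.fV (v, k) = true} := by
      funext k
      apply Set.ext
      intro v
      let S : Set G.V := ψ.fV k
      have h2 : decide (v ∈ S) = φ.fV (v, k) :=
        congrFun (congrArg IncHG.Hom.fV hψ) (v, k)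
      show v ∈ S ↔ _
      simp only [Set.mem_setOf_eq, ← h2]
      exact ⟨fun h => decide_eq_true h, fun h => of_decide_eq_true h⟩
    have hE : ψ.fE = fun k => {x | φ.fE (x, k) = true} := by
      funext k
      apply Set.ext
      intro x
      let S : Set G.E := ψ.fE k
      have h2 : decide (x ∈ S) = φ.fE (x, k) :=
        congrFun (congrArg IncHG.Hom.fE hψ) (x, k)
      show x ∈ S ↔ _
      simp only [Set.mem_setOf_eq, ← h2]
      exact ⟨fun h => decide_eq_true h, fun h => of_decide_eq_true h⟩
    apply IncHG.Hom.ext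
    · exact hV
    · exact hE
    · funext j
      have hIj := congrArg IncHG.Hom.fI hψ
      apply IncHG.Sub.ext'
      · have := ψ.comm_v j
        show (ψ.fI j).V' = _
        exact this.trans (congrFun hV (K.vmap j))
      · have := ψ.comm_e j
        show (ψ.fI j).E' = _
        exact this.trans (congrFun hE (K.emap j))
      · ext i
        have := congrFun hIj (i, j)
        show i ∈ (ψ.fI j).I' ↔ φ.fI (i, j) = none
        rw [← this]
        show _ ↔ (if i ∈ (ψ.fI j).I' then none
          else some (decide (G.vmap i ∈ (ψ.fI j).V'),
            decide (G.emap i ∈ (ψ.fI j).E'))) = none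
        by_cases h : i ∈ (ψ.fI j).I' <;> simp [h]
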